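/- Berge's algorithm is correct: if S = {s_1,…,s_n} is a finite family of nonempty finite sets, and T is computed by starting with T_1 = {{e} : e ∈ s_1} and iteratively setting T_i = min{ t ∪ {e} : t ∈ T_{i−1}, e ∈ s_i } for i = 2,…,n, then T_n equals the family of all minimal hitting sets of S. -/

import Mathlib

variable {α : Type*} [DecidableEq α]

/-- `T` is a hitting set of the family `S`. -/
def Hits (S : Set (Finset α)) (T : Finset α) : Prop := ∀ s ∈ S, (T ∩ s).Nonempty

/-- `T` is a minimal hitting set (transversal) of `S`. -/
def IsMHS (S : Set (Finset α)) (T : Finset α) : Prop :=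
  Hits S T ∧ ∀ T' ⊂ T, ¬ Hits S T'

/-- The transversal hypergraph: the family of all minimal hitting sets of `S`. -/
def Tr (S : Set (Finset α)) : Set (Finset α) := {T | IsMHS S T}

/-- The inclusion-minimal members of a family. -/
def minFam (F : Set (Finset α)) : Set (Finset α) := {e ∈ F | ∀ f ∈ F, f ⊆ e → f = e}

/-- One step of Berge's algorithm: extend each partial transversal by one element of
the new set, then minimize. -/
def bergeStep (T : Set (Finset α)) (s : Finset α) : Set (Finset α) :=
  minFam {u | ∃ t ∈ T, ∃ e ∈ s, u = t ∪ {e}}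

lemma Hits.mono {S : Set (Finset α)} {v w : Finset α} (h : v ⊆ w) (hv : Hits S v) :
    Hits S w := fun s hs => (hv s hs).mono (Finset.inter_subset_inter h le_rfl)

/-- Every hitting set contains a minimal hitting set. -/
lemma exists_mhs_subset (S : Set (Finset α)) (v : Finset α) (hv : Hits S v) :
    ∃ w, w ⊆ v ∧ IsMHS S w := by
  have hfin : {w : Finset α | w ⊆ v ∧ Hits S w}.Finite := by
    apply v.powerset.finite_toSet.subset
    intro w hw
    simpa using hw.1
  obtain ⟨w, hw, hmin⟩ : ∃ w ∈ {w : Finset α | w ⊆ v ∧ Hits S w},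
      ∀ a' ∈ {w : Finset α | w ⊆ v ∧ Hits S w}, id a' ≤ id w → id w = id a' := by
    obtain ⟨w, hw, hm⟩ := hfin.exists_minimalFor id _ ⟨v, le_rfl, hv⟩
    exact ⟨w, hw, fun a ha h => le_antisymm (hm ha h) h⟩
  refine ⟨w, hw.1, hw.2, fun T' hT' hhits => ?_⟩
  have : w = T' := hmin T' ⟨hT'.subset.trans hw.1, hhits⟩ hT'.subset
  exact hT'.ne this.symm

lemma mem_F_hits {S : Set (Finset α)} {s t : Finset α} {e : α}
    (ht : t ∈ Tr S) (he : e ∈ s) : Hits (insert s S) (t ∪ {e}) := by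
  intro s' hs'
  rcases hs' with rfl | hs'
  · exact ⟨e, Finset.mem_inter.2 ⟨Finset.mem_union_right _ (Finset.mem_singleton_self e), he⟩⟩
  · exact ((ht.1 s' hs').mono (Finset.inter_subset_inter Finset.subset_union_left le_rfl))

/-- The key step lemma. -/
lemma bergeStep_Tr (S : Set (Finset α)) (s : Finset α) :
    bergeStep (Tr S) s = Tr (insert s S) := by
  ext u
  constructor
  · rintro ⟨⟨t, ht, e, he, rfl⟩, hmin⟩
    refine ⟨mem_F_hits ht he, fun T' hT' hhits => ?_⟩
    have hS : Hits S T' := fun s' hs' => hhits s' (Set.mem_insert_of_mem _ hs')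
    obtain ⟨w, hwT, hw⟩ := exists_mhs_subset S T' hS
    obtain ⟨e', he'⟩ := hhits s (Set.mem_insert _ _)
    rw [Finset.mem_inter] at he'
    have hfF : w ∪ {e'} ∈ {u | ∃ t ∈ Tr S, ∃ e ∈ s, u = t ∪ {e}} :=
      ⟨w, hw, e', he'.2, rfl⟩
    have hsub : w ∪ {e'} ⊆ T' := Finset.union_subset hwT (Finset.singleton_subset_iff.2 he'.1)
    have heq := hmin _ hfF (hsub.trans hT'.subset)
    have h2 : t ∪ {e} ⊆ T' := by rw [← heq]; exact hsub
    exact hT'.ne (le_antisymm hT'.subset h2)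
  · rintro ⟨hhits, hmin⟩
    have hS : Hits S u := fun s' hs' => hhits s' (Set.mem_insert_of_mem _ hs')
    obtain ⟨t, htu, ht⟩ := exists_mhs_subset S u hS
    obtain ⟨e, he⟩ := hhits s (Set.mem_insert _ _)
    rw [Finset.mem_inter] at he
    have hsub : t ∪ {e} ⊆ u := Finset.union_subset htu (Finset.singleton_subset_iff.2 he.1)
    have heq : t ∪ {e} = u := by
      by_contra hne
      exact hmin _ (lt_of_le_of_ne hsub hne) (mem_F_hits ht he.2)
    refine ⟨⟨t, ht, e, he.2, heq.symm⟩, fun f hf hfu => ?_⟩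
    obtain ⟨t', ht', e', he', rfl⟩ := hf
    by_contra hne
    exact hmin _ (lt_of_le_of_ne hfu hne) (mem_F_hits ht' he')

lemma base_case (s₁ : Finset α) :
    {u : Finset α | ∃ e ∈ s₁, u = {e}} = Tr ({s₁} : Set (Finset α)) := by
  ext u
  constructor
  · rintro ⟨e, he, rfl⟩
    refine ⟨fun s hs => ?_, fun T' hT' hhits => ?_⟩
    · rw [Set.mem_singleton_iff] at hs; subst hs
      exact ⟨e, Finset.mem_inter.2 ⟨Finset.mem_singleton_self e, he⟩⟩
    · rw [Finset.ssubset_singleton_iff] at hT'; subst hT'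
      obtain ⟨x, hx⟩ := hhits s₁ rfl
      simp at hx
  · rintro ⟨hhits, hmin⟩
    obtain ⟨e, he⟩ := hhits s₁ rfl
    rw [Finset.mem_inter] at he
    refine ⟨e, he.2, ?_⟩
    by_contra hne
    have hsub : {e} ⊆ u := Finset.singleton_subset_iff.2 he.1
    refine hmin {e} (lt_of_le_of_ne hsub (fun h => hne h.symm)) (fun s hs => ?_)
    rw [Set.mem_singleton_iff] at hs; subst hs
    exact ⟨e, Finset.mem_inter.2 ⟨Finset.mem_singleton_self e, he.2⟩⟩

lemma foldl_berge (l : List (Finset α)) : ∀ (S : Set (Finset α)),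
    l.foldl bergeStep (Tr S) = Tr (S ∪ {x | x ∈ l}) := by
  induction l with
  | nil => intro S; simp
  | cons s l ih =>
    intro S
    have : List.foldl bergeStep (Tr S) (s :: l) = List.foldl bergeStep (Tr (insert s S)) l := by
      rw [List.foldl_cons, bergeStep_Tr]
    rw [this, ih]
    have hset : (insert s S ∪ {x : Finset α | x ∈ l}) = (S ∪ {x | x ∈ s :: l}) := by
      ext x; simp [List.mem_cons]; tauto
    rw [hset]

/-- Berge's algorithm is correct: iterating `bergeStep` starting from the singletons of
the first set yields exactly the minimal hitting sets. -/
theorem berge_correct (s₁ : Finset α) (rest : List (Finset α))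
    (hne : ∀ s ∈ s₁ :: rest, Finset.Nonempty s) :
    rest.foldl bergeStep {u | ∃ e ∈ s₁, u = {e}}
      = Tr {s | s ∈ s₁ :: rest} := by
  rw [base_case, foldl_berge]
  have hset : (({s₁} : Set (Finset α)) ∪ {x | x ∈ rest}) = {s | s ∈ s₁ :: rest} := by
    ext x; simp [List.mem_cons]
  rw [hset]
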